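/- Let n ≥ 4 be even and let I ⊆ {1,…,n} be nonempty. If n ≡ 0 (mod 4), then the set of I-canonical elements for the lattice 𝔍_{−w} of Spin(2n)/{1,−w} equals the set of I-canonical elements for the lattice 𝔍_Spin of Spin(2n). If n ≡ 2 (mod 4), then the set of I-canonical elements for 𝔍_{−w} equals the set of I-canonical elements for the lattice 𝔍_w of Spin(2n)/{1,w}. -/

import Mathlib

/-- The duals of the simple roots of `so(2n)` (1-based index):
`H_i = E_1+⋯+E_i` for `i ≤ n-2`, `H_{n-1} = (E_1+⋯+E_{n-1}-E_n)/2`,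
`H_n = (E_1+⋯+E_{n-1}+E_n)/2`. -/
noncomputable def Hso (n i : ℕ) : Fin n → ℝ :=
  if i = n - 1 then (fun j => if (j : ℕ) + 2 ≤ n then 1 / 2 else -(1 / 2))
  else if i = n then (fun _ => 1 / 2)
  else fun j => if (j : ℕ) + 1 ≤ i then 1 else 0

/-- `ε^i_I = 1` if `|I ∩ {n-1, n}| = i`, and `0` otherwise. -/
def epsI (n : ℕ) (I : Finset ℕ) (i : ℕ) : ℕ :=
  if (I ∩ {n - 1, n}).card = i then 1 else 0

/-- The integer lattice of `Spin(2n)`: integer vectors with even coordinate sum. -/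
def JSpin (n : ℕ) : Set (Fin n → ℝ) :=
  {v | ∃ a : Fin n → ℤ, (∀ j, v j = a j) ∧ Even (∑ j, a j)}

/-- The set of `I`-canonical elements for a lattice `𝔏 ⊆ ℝ^n`. -/
def ICanonSet (n : ℕ) (𝔏 : Set (Fin n → ℝ)) (H : ℕ → Fin n → ℝ) (I : Finset ℕ) :
    Set (Fin n → ℝ) :=
  {ξ | ∃ c : ℕ → ℕ, (∀ i ∈ I, 1 ≤ c i) ∧ ξ = ∑ i ∈ I, c i • H i ∧ ξ ∈ 𝔏 ∧
    ∀ c' : ℕ → ℕ, (∀ i ∈ I, 1 ≤ c' i ∧ c' i ≤ c i) →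
      (∑ i ∈ I, c' i • H i) ∈ 𝔏 → (∑ i ∈ I, c' i • H i) = ξ}

/-- Highest weights of the representations of `Spin(2n)` descending to
`Spin(2n)/{1,w}`. -/
def IsWWeight (n : ℕ) (lam : Fin n → ℝ) : Prop :=
  (∀ j k : Fin n, (j : ℕ) ≤ (k : ℕ) → (k : ℕ) + 2 ≤ n → lam k ≤ lam j) ∧
  (∀ j k : Fin n, (j : ℕ) + 2 ≤ n → (k : ℕ) + 1 = n → |lam k| ≤ lam j) ∧
  ((∀ j, ∃ m : ℤ, lam j = m) ∨ (∀ j, ∃ m : ℤ, lam j = m + 1 / 2)) ∧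
  (∃ m : ℤ, ∑ j, lam j = 2 * m)

/-- Highest weights of the representations of `Spin(2n)` descending to
`Spin(2n)/{1,-w}`: `λ_1 ≥ … ≥ λ_{n-1} ≥ |λ_n|`, all `λ_i` integers or all
half-integers, and `λ_1 + ⋯ + λ_n - n/2` an odd integer. -/
def IsNegWWeight (n : ℕ) (lam : Fin n → ℝ) : Prop :=
  (∀ j k : Fin n, (j : ℕ) ≤ (k : ℕ) → (k : ℕ) + 2 ≤ n → lam k ≤ lam j) ∧
  (∀ j k : Fin n, (j : ℕ) + 2 ≤ n → (k : ℕ) + 1 = n → |lam k| ≤ lam j) ∧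
  ((∀ j, ∃ m : ℤ, lam j = m) ∨ (∀ j, ∃ m : ℤ, lam j = m + 1 / 2)) ∧
  (∃ m : ℤ, Odd m ∧ ∑ j, lam j = m + (n : ℝ) / 2)

/-- The integer lattice of `Spin(2n)/{1,w}`. -/
def Jw (n : ℕ) : Set (Fin n → ℝ) :=
  {ξ | ∀ lam : Fin n → ℝ, IsWWeight n lam → ∃ m : ℤ, ∑ j, lam j * ξ j = m}

/-- The integer lattice of `Spin(2n)/{1,-w}`. -/
def JnegW (n : ℕ) : Set (Fin n → ℝ) :=
  {ξ | ∀ lam : Fin n → ℝ, IsNegWWeight n lam → ∃ m : ℤ, ∑ j, lam j * ξ j = m}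


section Aux

/-- The integer weight `(2,…,2,1,0,…,0)` with `j` twos (0-indexed position `j` gets 1). -/
noncomputable def lamA (n j : ℕ) : Fin n → ℝ :=
  fun k => if (k : ℕ) < j then 2 else if (k : ℕ) = j then 1 else 0

lemma lamA_split (n j : ℕ) (hj : j < n) (k : Fin n) :
    lamA n j k = (if (k : ℕ) < j then (2:ℝ) else 0) +
      (if k = (⟨j, hj⟩ : Fin n) then (1:ℝ) else 0) := by
  unfold lamA
  rcases lt_trichotomy (k : ℕ) j with h | h | h
  · rw [if_pos h, if_pos h, if_neg (by simp [Fin.ext_iff]; omega)]; ring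
  · rw [if_neg (by omega), if_pos h, if_neg (by omega),
      if_pos (by simp [Fin.ext_iff, h])]; ring
  · rw [if_neg (by omega), if_neg (by omega), if_neg (by omega),
      if_neg (by simp [Fin.ext_iff]; omega)]; ring

lemma filter_lt_eq (n j : ℕ) (hj : j < n) :
    (Finset.univ.filter fun k : Fin n => (k : ℕ) < j) = Finset.Iio (⟨j, hj⟩ : Fin n) := by
  ext k; simp [Fin.lt_def]

lemma lamA_sum (n j : ℕ) (hj : j < n) : ∑ k, lamA n j k = 2 * j + 1 := by
  rw [Finset.sum_congr rfl fun k _ => lamA_split n j hj k, Finset.sum_add_distrib,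
    Finset.sum_ite_eq' Finset.univ (⟨j, hj⟩ : Fin n) (fun _ => (1:ℝ)),
    if_pos (Finset.mem_univ _), ← Finset.sum_filter, filter_lt_eq n j hj,
    Finset.sum_const, Fin.card_Iio]
  simp; ring

lemma lamA_negw (n j : ℕ) (hj : j < n) (h0 : n % 4 = 0) :
    IsNegWWeight n (lamA n j) := by
  have anti : ∀ a b : Fin n, (a : ℕ) ≤ (b : ℕ) → lamA n j b ≤ lamA n j a := by
    intro a b hab
    unfold lamA
    split_ifs <;> norm_num <;> omega
  have nonneg : ∀ a : Fin n, 0 ≤ lamA n j a := by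
    intro a; unfold lamA; split_ifs <;> norm_num
  refine ⟨fun a b hab _ => anti a b hab, ?_, ?_, ?_⟩
  · intro a b ha hb
    rw [abs_of_nonneg (nonneg b)]
    exact anti a b (by omega)
  · left
    intro k
    unfold lamA
    split_ifs
    exacts [⟨2, by norm_num⟩, ⟨1, by norm_num⟩, ⟨0, by norm_num⟩]
  · refine ⟨2 * j + 1 - (n / 2 : ℕ), ?_, ?_⟩
    · rw [Int.odd_iff]; omega
    · rw [lamA_sum n j hj]
      obtain ⟨hf, hhf⟩ : ∃ hf : ℕ, n = 2 * hf := ⟨n / 2, by omega⟩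
      have hcast : (n : ℝ) / 2 = (hf : ℕ) := by subst hhf; push_cast; ring
      have hd : n / 2 = hf := by omega
      rw [hcast, hd]
      push_cast
      ring

lemma lamA_dot (n j : ℕ) (hj : j < n) (ξ : Fin n → ℝ) :
    ∑ k, lamA n j k * ξ k =
      2 * (∑ k ∈ Finset.Iio (⟨j, hj⟩ : Fin n), ξ k) + ξ ⟨j, hj⟩ := by
  have : ∀ k : Fin n, lamA n j k * ξ k =
      (if (k : ℕ) < j then 2 * ξ k else 0) +
      (if k = (⟨j, hj⟩ : Fin n) then ξ k else 0) := by
    intro k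
    rw [lamA_split n j hj k]
    split_ifs <;> ring
  rw [Finset.sum_congr rfl fun k _ => this k, Finset.sum_add_distrib,
    Finset.sum_ite_eq' Finset.univ (⟨j, hj⟩ : Fin n) ξ, if_pos (Finset.mem_univ _),
    ← Finset.sum_filter, filter_lt_eq n j hj, Finset.mul_sum]

/-- The half-integer weight `(3/2, 1/2, …, 1/2)`. -/
noncomputable def lamB (n : ℕ) : Fin n → ℝ :=
  fun k => if (k : ℕ) = 0 then 3 / 2 else 1 / 2

lemma lamB_negw (n : ℕ) (hn : 4 ≤ n) (h0 : n % 4 = 0) : IsNegWWeight n (lamB n) := by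
  have h0n : 0 < n := by omega
  have hsplit : ∀ k : Fin n, lamB n k =
      1 / 2 + (if k = (⟨0, h0n⟩ : Fin n) then (1:ℝ) else 0) := by
    intro k
    unfold lamB
    rcases eq_or_ne (k : ℕ) 0 with h | h
    · rw [if_pos h, if_pos (by simp [Fin.ext_iff, h])]; norm_num
    · rw [if_neg h, if_neg (by simp [Fin.ext_iff]; omega)]; norm_num
  refine ⟨?_, ?_, ?_, ?_⟩
  · intro a b hab _
    unfold lamB
    split_ifs <;> norm_num <;> omega
  · intro a b ha hb
    have hb0 : (b : ℕ) ≠ 0 := by omega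
    have : lamB n b = 1 / 2 := by unfold lamB; rw [if_neg hb0]
    rw [this, abs_of_nonneg (by norm_num)]
    unfold lamB; split_ifs <;> norm_num
  · right
    intro k
    unfold lamB
    split_ifs
    exacts [⟨1, by norm_num⟩, ⟨0, by norm_num⟩]
  · refine ⟨1, odd_one, ?_⟩
    rw [Finset.sum_congr rfl fun k _ => hsplit k, Finset.sum_add_distrib,
      Finset.sum_ite_eq' Finset.univ (⟨0, h0n⟩ : Fin n) (fun _ => (1:ℝ)),
      if_pos (Finset.mem_univ _), Finset.sum_const, Finset.card_univ, Fintype.card_fin]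
    push_cast
    ring

lemma jspin_sub_jnegw (n : ℕ) : JSpin n ⊆ JnegW n := by
  rintro ξ ⟨a, ha, t, ht⟩ lam ⟨-, -, h3, -⟩
  rcases h3 with hint | hhalf
  · choose m hm using hint
    refine ⟨∑ j, m j * a j, ?_⟩
    push_cast
    exact Finset.sum_congr rfl fun j _ => by rw [hm j, ha j]
  · choose m hm using hhalf
    refine ⟨(∑ j, m j * a j) + t, ?_⟩
    have : ∀ j : Fin n, lam j * ξ j = (m j : ℝ) * (a j : ℝ) + (a j : ℝ) / 2 := by
      intro j; rw [hm j, ha j]; ring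
    rw [Finset.sum_congr rfl fun j _ => this j, Finset.sum_add_distrib,
      ← Finset.sum_div]
    have hsa : ((∑ j, a j : ℤ) : ℝ) = (t : ℝ) + (t : ℝ) := by exact_mod_cast ht
    push_cast at hsa ⊢
    rw [hsa]; ring

lemma jnegw_sub_jspin (n : ℕ) (hn : 4 ≤ n) (h0 : n % 4 = 0) : JnegW n ⊆ JSpin n := by
  intro ξ hξ
  set S : ℕ → ℝ := fun N => ∑ k ∈ Finset.univ.filter (fun k : Fin n => (k : ℕ) < N), ξ k
    with hS
  have hstep : ∀ N (hN : N < n), S (N + 1) = S N + ξ ⟨N, hN⟩ := by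
    intro N hN
    have hins : (Finset.univ.filter fun k : Fin n => (k : ℕ) < N + 1) =
        insert (⟨N, hN⟩ : Fin n) (Finset.univ.filter fun k : Fin n => (k : ℕ) < N) := by
      ext k; simp [Fin.ext_iff]; omega
    rw [hS]
    simp only [hins]
    rw [Finset.sum_insert (by simp)]
    ring
  have hdot : ∀ N (hN : N < n), ∃ t : ℤ, 2 * S N + ξ ⟨N, hN⟩ = t := by
    intro N hN
    obtain ⟨t, ht⟩ := hξ (lamA n N) (lamA_negw n N hN h0)
    refine ⟨t, ?_⟩
    have hSe : S N = ∑ k ∈ Finset.Iio (⟨N, hN⟩ : Fin n), ξ k := by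
      simp only [hS]; rw [filter_lt_eq n N hN]
    rw [← ht, lamA_dot n N hN ξ, hSe]
  have hSint : ∀ N, N ≤ n → ∃ s : ℤ, S N = s := by
    intro N
    induction N with
    | zero => intro _; exact ⟨0, by simp [hS]⟩
    | succ N ih =>
      intro hN1
      have hN : N < n := by omega
      obtain ⟨s, hs⟩ := ih (by omega)
      obtain ⟨t, ht⟩ := hdot N hN
      refine ⟨t - s, ?_⟩
      rw [hstep N hN]
      push_cast
      rw [← hs]
      linarith
  have hint : ∀ j : Fin n, ∃ a : ℤ, ξ j = a := by
    intro j
    obtain ⟨s1, hs1⟩ := hSint j (le_of_lt j.isLt)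
    obtain ⟨s2, hs2⟩ := hSint (j + 1) j.isLt
    refine ⟨s2 - s1, ?_⟩
    have := hstep j j.isLt
    rw [hs1, hs2] at this
    push_cast
    simp only [Fin.eta] at this
    linarith
  choose a ha using hint
  refine ⟨a, ha, ?_⟩
  obtain ⟨t, ht⟩ := hξ (lamB n) (lamB_negw n hn h0)
  have h0n : 0 < n := by omega
  have hdotB : ∑ j, lamB n j * ξ j = (∑ j, ξ j) / 2 + ξ ⟨0, h0n⟩ := by
    have : ∀ k : Fin n, lamB n k * ξ k =
        ξ k / 2 + (if k = (⟨0, h0n⟩ : Fin n) then ξ k else 0) := by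
      intro k
      unfold lamB
      rcases eq_or_ne (k : ℕ) 0 with h | h
      · rw [if_pos h, if_pos (by simp [Fin.ext_iff, h])]; ring
      · rw [if_neg h, if_neg (by simp [Fin.ext_iff]; omega)]; ring
    rw [Finset.sum_congr rfl fun k _ => this k, Finset.sum_add_distrib,
      Finset.sum_ite_eq' Finset.univ (⟨0, h0n⟩ : Fin n) ξ, if_pos (Finset.mem_univ _),
      ← Finset.sum_div]
  rw [hdotB] at ht
  have hsum : (∑ j, ξ j) = ((∑ j, a j : ℤ) : ℝ) := by
    push_cast
    exact Finset.sum_congr rfl fun j _ => ha j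
  rw [hsum, ha ⟨0, h0n⟩] at ht
  field_simp at ht
  have hr : ((((∑ j, a j) + (a ⟨0, h0n⟩) * 2 : ℤ)) : ℝ) = ((t * 2 : ℤ) : ℝ) := by
    push_cast at ht ⊢
    linarith [ht]
  have h2 : ((∑ j, a j) + (a ⟨0, h0n⟩) * 2 : ℤ) = t * 2 := by exact_mod_cast hr
  exact ⟨t - a ⟨0, h0n⟩, by omega⟩

lemma jnegw_eq_jspin (n : ℕ) (hn : 4 ≤ n) (h0 : n % 4 = 0) : JnegW n = JSpin n :=
  Set.Subset.antisymm (jnegw_sub_jspin n hn h0) (jspin_sub_jnegw n)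

lemma negw_iff_w (n : ℕ) (h2 : n % 4 = 2) (lam : Fin n → ℝ) :
    IsNegWWeight n lam ↔ IsWWeight n lam := by
  obtain ⟨hf, hhf⟩ : ∃ hf : ℕ, n = 2 * hf := ⟨n / 2, by omega⟩
  have hcast : (n : ℝ) / 2 = (hf : ℕ) := by subst hhf; push_cast; ring
  have hfodd : hf % 2 = 1 := by omega
  constructor
  · rintro ⟨h1, hb, h3, m, hmodd, hsum⟩
    have hmo : m % 2 = 1 := Int.odd_iff.mp hmodd
    obtain ⟨k, hk⟩ : ∃ k : ℤ, m + (hf : ℤ) = 2 * k := ⟨(m + hf) / 2, by omega⟩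
    refine ⟨h1, hb, h3, k, ?_⟩
    have hkr : (m : ℝ) + (hf : ℝ) = 2 * (k : ℝ) := by exact_mod_cast hk
    rw [hsum, hcast]; linarith
  · rintro ⟨h1, hb, h3, m, hsum⟩
    refine ⟨h1, hb, h3, 2 * m - hf, ?_, ?_⟩
    · rw [Int.odd_iff]; omega
    · have : ((2 * m - hf : ℤ) : ℝ) = 2 * (m : ℝ) - (hf : ℝ) := by push_cast; ring
      rw [hsum, hcast, this]; ring

lemma jnegw_eq_jw (n : ℕ) (h2 : n % 4 = 2) : JnegW n = Jw n := by
  ext ξ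
  exact forall_congr' fun lam => imp_congr (negw_iff_w n h2 lam) Iff.rfl

end Aux

/-- For `n ≥ 4` even: if `n ≡ 0 (mod 4)` the `I`-canonical elements
of `Spin(2n)/{1,-w}` are exactly those of `Spin(2n)`; if `n ≡ 2 (mod 4)` they are
exactly those of `Spin(2n)/{1,w}`. -/
theorem spin_even_quotient_negw_canonical (n : ℕ) (hn : 4 ≤ n) (hneven : Even n)
    (I : Finset ℕ) (hI : I ⊆ Finset.Icc 1 n) (hne : I.Nonempty) :
    (n % 4 = 0 →
      ICanonSet n (JnegW n) (Hso n) I = ICanonSet n (JSpin n) (Hso n) I) ∧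
    (n % 4 = 2 →
      ICanonSet n (JnegW n) (Hso n) I = ICanonSet n (Jw n) (Hso n) I) := by
  constructor
  · intro h0
    rw [jnegw_eq_jspin n hn h0]
  · intro h2
    rw [jnegw_eq_jw n h2]
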